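/- Let R be a Noetherian ring and I an ideal. The set of r in R such that r^n lies in the integral closure of I^{n+1} for some n ≥ 1 is an ideal of R (the inner integral closure of I). -/
import Mathlib

/-- The integral closure of an ideal `I`: elements `x` satisfying a monic equation
`x^d + a 1 * x^(d-1) + ... + a d = 0` with `a j ∈ I^j` for `1 ≤ j ≤ d`. -/
def Ideal.intClosure {R : Type*} [CommRing R] (I : Ideal R) : Set R :=
  {x | ∃ (d : ℕ) (a : ℕ → R), 0 < d ∧ (∀ j, 1 ≤ j → j ≤ d → a j ∈ I ^ j) ∧
    x ^ d + ∑ j ∈ Finset.Icc 1 d, a j * x ^ (d - j) = 0}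

/-- The inner integral closure of an ideal `I`:
`{ r | ∃ n ≥ 1, r ^ n ∈ integral closure of I ^ (n+1) }`. -/
def Ideal.innerIntClosure {R : Type*} [CommRing R] (I : Ideal R) : Set R :=
  {r | ∃ n : ℕ, 1 ≤ n ∧ r ^ n ∈ (I ^ (n + 1)).intClosure}

open Polynomial Finset

section Aux

variable {R : Type*} [CommRing R] (I : Ideal R)

/-- `x` is in the integral closure of `I^k` iff `x·X^k` is integral over the Rees algebra. -/
theorem mem_intClosure_pow_iff (k : ℕ) (x : R) :
    x ∈ (I ^ k).intClosure ↔
      (C x * X ^ k : R[X]) ∈ integralClosure (reesAlgebra I) R[X] := by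
  constructor
  · rintro ⟨d, a, hd, ha, heq⟩
    set b : ℕ → ↥(reesAlgebra I) := fun j =>
      if h : 1 ≤ j ∧ j ≤ d then
        ⟨C (a j) * X ^ (k * j), by
          rw [mem_reesAlgebra_iff]
          intro i
          rw [coeff_C_mul, coeff_X_pow]
          rcases eq_or_ne i (k * j) with h' | h'
          · subst h'
            rw [if_pos rfl, mul_one, pow_mul]
            exact ha j h.1 h.2
          · simp [h']⟩
      else 0 with hbdef
    refine ⟨X ^ d + ∑ j ∈ Icc 1 d, C (b j) * X ^ (d - j), ?_, ?_⟩
    · apply monic_X_pow_add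
      apply lt_of_le_of_lt (degree_sum_le _ _)
      rw [Finset.sup_lt_iff (by exact_mod_cast WithBot.bot_lt_coe d)]
      intro j hj
      refine lt_of_le_of_lt (degree_C_mul_X_pow_le _ _) ?_
      simp only [mem_Icc] at hj
      exact_mod_cast (by omega : d - j < d)
    · rw [eval₂_add, eval₂_X_pow, eval₂_finset_sum]
      have hterm : ∀ j ∈ Icc 1 d,
          eval₂ (algebraMap (↥(reesAlgebra I)) R[X]) (C x * X ^ k) (C (b j) * X ^ (d - j))
            = C (a j * x ^ (d - j)) * X ^ (k * d) := by
        intro j hj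
        simp only [mem_Icc] at hj
        rw [eval₂_mul, eval₂_C, eval₂_X_pow]
        have hbj : (algebraMap (↥(reesAlgebra I)) R[X]) (b j) = C (a j) * X ^ (k * j) := by
          rw [hbdef]; simp only [dif_pos hj]; rfl
        rw [hbj, mul_pow, ← C_pow, ← pow_mul, C_mul,
          show k * d = k * j + k * (d - j) by rw [← Nat.mul_add, Nat.add_sub_cancel' hj.2],
          pow_add]
        ring
      rw [Finset.sum_congr rfl hterm, ← Finset.sum_mul, mul_pow, ← C_pow, ← pow_mul,
        ← map_sum C _ _, ← add_mul, ← C_add, heq]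
      simp
  · rintro ⟨p, hmonic, heval⟩
    set d := p.natDegree with hddef
    rcases Nat.eq_zero_or_pos d with hd0 | hd
    · -- degenerate: p = 1 so the ring is trivial
      have hp1 : p = 1 := hmonic.natDegree_eq_zero.mp hd0
      have h10 : (1 : R) = 0 := by
        rw [hp1, eval₂_one] at heval
        simpa using congrArg (fun q : R[X] => q.coeff 0) heval
      have hall : ∀ r : R, r = 0 := fun r => by rw [← mul_one r, h10, mul_zero]
      exact ⟨1, fun _ => 0, one_pos, fun j _ _ => by simp, hall _⟩
    · have heval' : (0 : R[X]) =
          ∑ i ∈ range (d + 1), ((p.coeff i : R[X])) * (C x * X ^ k) ^ i := by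
        have := Polynomial.eval₂_eq_sum_range (algebraMap (↥(reesAlgebra I)) R[X])
          (C x * X ^ k) (p := p)
        rw [heval] at this
        exact this
      have hco : ∀ i, i ≤ d →
          (((p.coeff i : R[X])) * (C x * X ^ k) ^ i).coeff (k * d)
            = ((p.coeff i : R[X])).coeff (k * (d - i)) * x ^ i := by
        intro i hi
        rw [mul_pow, ← C_pow, ← pow_mul, ← mul_assoc, coeff_mul_X_pow',
          if_pos (Nat.mul_le_mul_left k hi), coeff_mul_C, ← Nat.mul_sub]
      have key : (0 : R) =
          ∑ i ∈ range (d + 1), ((p.coeff i : R[X])).coeff (k * (d - i)) * x ^ i := by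
        have h1 : (0 : R[X]).coeff (k * d)
            = (∑ i ∈ range (d + 1), ((p.coeff i : R[X])) * (C x * X ^ k) ^ i).coeff (k * d) := by
          rw [← heval']
        rw [coeff_zero, finset_sum_coeff] at h1
        rw [h1]
        exact Finset.sum_congr rfl fun i hi => hco i (by simp only [mem_range] at hi; omega)
      refine ⟨d, fun j => ((p.coeff (d - j) : R[X])).coeff (k * j), hd, ?_, ?_⟩
      · intro j _ _
        rw [← pow_mul]
        exact (mem_reesAlgebra_iff I _).mp (p.coeff (d - j)).2 (k * j)
      · rw [Finset.sum_range_succ] at key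
        have hlead : ((p.coeff d : R[X])).coeff (k * (d - d)) = 1 := by
          rw [Nat.sub_self, Nat.mul_zero]
          have : p.coeff d = 1 := hmonic.coeff_natDegree
          rw [this]
          simp [OneMemClass.coe_one]
        rw [hlead, one_mul] at key
        have hre : ∑ i ∈ range d, ((p.coeff i : R[X])).coeff (k * (d - i)) * x ^ i
            = ∑ j ∈ Icc 1 d, ((p.coeff (d - j) : R[X])).coeff (k * j) * x ^ (d - j) := by
          refine Finset.sum_nbij' (fun i => d - i) (fun j => d - j) ?_ ?_ ?_ ?_ ?_
          · intro i hi; simp only [mem_range] at hi; simp only [mem_Icc]; omega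
          · intro j hj; simp only [mem_Icc] at hj; simp only [mem_range]; omega
          · intro i hi; simp only [mem_range] at hi; show d - (d - i) = i; omega
          · intro j hj; simp only [mem_Icc] at hj; show d - (d - j) = j; omega
          · intro i hi
            simp only [mem_range] at hi
            rw [Nat.sub_sub_self (by omega)]
        rw [hre] at key
        linear_combination -key

theorem intClosure_mono {J K : Ideal R} (h : J ≤ K) : J.intClosure ⊆ K.intClosure := by
  rintro x ⟨d, a, hd, ha, heq⟩
  exact ⟨d, a, hd, fun j h1 h2 => Ideal.pow_right_mono h j (ha j h1 h2), heq⟩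

theorem C_mem_reesAlgebra (c : R) : (C c : R[X]) ∈ reesAlgebra I := by
  rw [mem_reesAlgebra_iff]
  intro i
  rw [coeff_C]
  split_ifs with h
  · rw [h, pow_zero, Ideal.one_eq_top]; exact Submodule.mem_top
  · exact zero_mem _

theorem smul_mem_intClosure_pow (k : ℕ) (c x : R) (hx : x ∈ (I ^ k).intClosure) :
    c * x ∈ (I ^ k).intClosure := by
  rw [mem_intClosure_pow_iff] at hx ⊢
  have : (C (c * x) * X ^ k : R[X]) = C c * (C x * X ^ k) := by rw [C_mul]; ring
  rw [this]
  exact mul_mem ((integralClosure (reesAlgebra I) R[X]).algebraMap_mem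
    ⟨C c, C_mem_reesAlgebra I c⟩) hx

theorem pow_mem_intClosure_pow (a t : ℕ) (x : R) (hx : x ∈ (I ^ a).intClosure) :
    x ^ t ∈ (I ^ (a * t)).intClosure := by
  rw [mem_intClosure_pow_iff] at hx ⊢
  have : (C (x ^ t) * X ^ (a * t) : R[X]) = (C x * X ^ a) ^ t := by
    rw [mul_pow, ← C_pow, ← pow_mul]
  rw [this]
  exact pow_mem hx t

theorem mul_mem_intClosure_pow (a b : ℕ) (x y : R) (hx : x ∈ (I ^ a).intClosure)
    (hy : y ∈ (I ^ b).intClosure) : x * y ∈ (I ^ (a + b)).intClosure := by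
  rw [mem_intClosure_pow_iff] at hx hy ⊢
  have : (C (x * y) * X ^ (a + b) : R[X]) = (C x * X ^ a) * (C y * X ^ b) := by
    rw [C_mul, pow_add]; ring
  rw [this]
  exact mul_mem hx hy

theorem sum_mem_intClosure_pow {ι : Type*} (k : ℕ) (s : Finset ι) (f : ι → R)
    (h : ∀ i ∈ s, f i ∈ (I ^ k).intClosure) : (∑ i ∈ s, f i) ∈ (I ^ k).intClosure := by
  rw [mem_intClosure_pow_iff]
  have : (C (∑ i ∈ s, f i) * X ^ k : R[X]) = ∑ i ∈ s, C (f i) * X ^ k := by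
    rw [show (C (∑ i ∈ s, f i) : R[X]) = ∑ i ∈ s, C (f i) from map_sum C f s, Finset.sum_mul]
  rw [this]
  exact sum_mem fun i hi => (mem_intClosure_pow_iff I k (f i)).mp (h i hi)

theorem zero_mem_intClosure (J : Ideal R) : (0 : R) ∈ J.intClosure :=
  ⟨1, fun _ => 0, one_pos, fun j _ _ => zero_mem _, by simp⟩

end Aux

set_option maxHeartbeats 1000000 in
/-- The inner integral closure of `I` is an ideal of `R`. -/
theorem stmt2 {R : Type*} [CommRing R] [IsNoetherianRing R] (I : Ideal R) :
    ∃ J : Ideal R, ∀ r : R, r ∈ J ↔ r ∈ I.innerIntClosure := by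
  have hzero : (0 : R) ∈ I.innerIntClosure :=
    ⟨1, le_refl 1, by rw [pow_one]; exact zero_mem_intClosure _⟩
  have hsmul : ∀ c r : R, r ∈ I.innerIntClosure → c * r ∈ I.innerIntClosure := by
    rintro c r ⟨n, hn, h⟩
    refine ⟨n, hn, ?_⟩
    rw [mul_pow]
    exact smul_mem_intClosure_pow I (n + 1) (c ^ n) (r ^ n) h
  have hadd : ∀ r s : R, r ∈ I.innerIntClosure → s ∈ I.innerIntClosure →
      r + s ∈ I.innerIntClosure := by
    rintro r s ⟨n, hn, hr⟩ ⟨m, hm, hs⟩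
    obtain ⟨N, hNdef⟩ : ∃ N, N = n * m * (n + m + 2) := ⟨_, rfl⟩
    have hN1 : 1 ≤ N := by
      have h1 : 1 * 1 * (n + m + 2) ≤ n * m * (n + m + 2) :=
        Nat.mul_le_mul (Nat.mul_le_mul hn hm) le_rfl
      omega
    refine ⟨N, hN1, ?_⟩
    rw [add_pow]
    apply sum_mem_intClosure_pow
    intro i hi
    simp only [mem_range] at hi
    have hiN : i ≤ N := by omega
    obtain ⟨k, hkdef⟩ : ∃ k, k = i / n := ⟨_, rfl⟩
    obtain ⟨l, hldef⟩ : ∃ l, l = (N - i) / m := ⟨_, rfl⟩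
    have hrk : (r ^ n) ^ k ∈ (I ^ ((n + 1) * k)).intClosure :=
      pow_mem_intClosure_pow I (n + 1) k _ hr
    have hsl : (s ^ m) ^ l ∈ (I ^ ((m + 1) * l)).intClosure :=
      pow_mem_intClosure_pow I (m + 1) l _ hs
    have hmul : (r ^ n) ^ k * (s ^ m) ^ l
        ∈ (I ^ ((n + 1) * k + (m + 1) * l)).intClosure :=
      mul_mem_intClosure_pow I _ _ _ _ hrk hsl
    -- arithmetic: (n+1)*k + (m+1)*l ≥ N + 1
    have harith : N + 1 ≤ (n + 1) * k + (m + 1) * l := by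
      have e1 : n * k + i % n = i := by rw [hkdef]; exact Nat.div_add_mod i n
      have e2 : i % n < n := Nat.mod_lt _ (by omega)
      have f1 : m * l + (N - i) % m = N - i := by rw [hldef]; exact Nat.div_add_mod (N - i) m
      have f2 : (N - i) % m < m := Nat.mod_lt _ (by omega)
      -- pass to ℤ
      have h1n : i + 1 ≤ n * k + n := by generalize n * k = q at e1 ⊢; omega
      have h2n : N - i + 1 ≤ m * l + m := by generalize m * l = q at f1 ⊢; omega
      have h1z : (i : ℤ) + 1 ≤ n * k + n := by exact_mod_cast h1n
      have h2z : (N : ℤ) - i + 1 ≤ m * l + m := by zify [hiN] at h2n; exact h2n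
      have hNz : (N : ℤ) = n * m * (n + m + 2) := by rw [hNdef]; push_cast; ring
      have key : (n : ℤ) * m * (N + 1) + 1 ≤ n * m * ((n + 1) * k + (m + 1) * l) := by
        have g1 : (m : ℤ) * (n + 1) * (i + 1) ≤ m * (n + 1) * (n * k + n) :=
          mul_le_mul_of_nonneg_left h1z (by positivity)
        have g2 : (n : ℤ) * (m + 1) * ((N : ℤ) - i + 1) ≤ n * (m + 1) * (m * l + m) :=
          mul_le_mul_of_nonneg_left h2z (by positivity)
        have hm1 : (1 : ℤ) ≤ (m : ℤ) := by exact_mod_cast hm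
        have hn1 : (1 : ℤ) ≤ (n : ℤ) := by exact_mod_cast hn
        have hnm : (1 : ℤ) ≤ (n : ℤ) * m := by nlinarith
        have g3 : (i : ℤ) + 1 ≤ m * (i + 1) := by nlinarith [(by positivity : (0:ℤ) ≤ (i:ℤ))]
        have g4 : (N : ℤ) - i + 1 ≤ n * ((N : ℤ) - i + 1) := by
          have h0 : (0 : ℤ) ≤ (N : ℤ) - i := by omega
          nlinarith
        nlinarith [g1, g2, g3, g4, hNz, hnm]
      have hnm : (1 : ℤ) ≤ (n : ℤ) * m := by
        have hm1 : (1 : ℤ) ≤ (m : ℤ) := by exact_mod_cast hm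
        have hn1 : (1 : ℤ) ≤ (n : ℤ) := by exact_mod_cast hn
        nlinarith
      zify
      nlinarith [key, hnm]
    have hmono : (r ^ n) ^ k * (s ^ m) ^ l ∈ (I ^ (N + 1)).intClosure :=
      intClosure_mono (Ideal.pow_le_pow_right harith) hmul
    have hsplit : r ^ i * s ^ (N - i) * (N.choose i : R)
        = (r ^ (i % n) * s ^ ((N - i) % m) * (N.choose i : R))
          * ((r ^ n) ^ k * (s ^ m) ^ l) := by
      have h1 : r ^ i = (r ^ n) ^ k * r ^ (i % n) := by
        rw [hkdef, ← pow_mul, ← pow_add, Nat.div_add_mod]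
      have h2 : s ^ (N - i) = (s ^ m) ^ l * s ^ ((N - i) % m) := by
        rw [hldef, ← pow_mul, ← pow_add, Nat.div_add_mod]
      rw [h1, h2]; ring
    rw [hsplit]
    exact smul_mem_intClosure_pow I (N + 1) _ _ hmono
  exact ⟨{ carrier := I.innerIntClosure, zero_mem' := hzero, add_mem' := fun ha hb => hadd _ _ ha hb, smul_mem' := fun c x hx => hsmul c x hx }, fun r => Iff.rfl⟩
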